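/- Let ν ∈ (0, π/16), let m ≥ 4 be a real number, let θ ∈ ℂ with Im θ = ν and |Re θ| ≤ 10⁻³, and let λ ∈ ℂ. Then for every z ∈ ℂ with z ∉ C_m(λ), every r with 0 ≤ r ≤ |z − λ|, and every s ≥ 0, one has (s + r)/dist(z − e^{−θ}·s, C_m(λ)) ≤ 2/sin(ν/m) + r/dist(z, C_m(λ)). -/

import Mathlib

open Real

/-- The closed cone `C_m(w) = { w + x e^{-iα} : x ≥ 0, |α - ν| ≤ ν/m }` with vertex `w`. -/
def cone (ν m : ℝ) (w : ℂ) : Set ℂ :=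
  {z : ℂ | ∃ x : ℝ, 0 ≤ x ∧ ∃ α : ℝ, |α - ν| ≤ ν / m ∧
    z = w + (x : ℂ) * Complex.exp (-(α : ℂ) * Complex.I)}

private lemma im_aux (ψ x α : ℝ) :
    (Complex.exp ((ψ:ℂ) * Complex.I) * ((x:ℂ) * Complex.exp (-(α:ℂ) * Complex.I))).im
      = x * Real.sin (ψ - α) := by
  have h : -(α:ℂ) * Complex.I + (ψ:ℂ) * Complex.I = ((ψ - α : ℝ) : ℂ) * Complex.I := by
    push_cast; ring
  rw [mul_comm (Complex.exp _), mul_assoc, ← Complex.exp_add, h]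
  simp only [Complex.mul_im, Complex.ofReal_re, Complex.ofReal_im,
    Complex.exp_ofReal_mul_I_im, zero_mul, add_zero]

private lemma im_le_dist (ψ : ℝ) (u v : ℂ) :
    (Complex.exp ((ψ:ℂ) * Complex.I) * u).im - (Complex.exp ((ψ:ℂ) * Complex.I) * v).im
      ≤ ‖u - v‖ := by
  rw [← Complex.sub_im, ← mul_sub]
  calc (Complex.exp ((ψ:ℂ)*Complex.I) * (u - v)).im
      ≤ |(Complex.exp ((ψ:ℂ)*Complex.I) * (u - v)).im| := le_abs_self _
    _ ≤ ‖Complex.exp ((ψ:ℂ)*Complex.I) * (u - v)‖ := Complex.abs_im_le_norm _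
    _ = ‖u - v‖ := by rw [norm_mul, Complex.norm_exp_ofReal_mul_I, one_mul]

private lemma le_infDist' {s : Set ℂ} (hs : s.Nonempty) {x : ℂ} {c : ℝ}
    (h : ∀ y ∈ s, c ≤ dist x y) : c ≤ Metric.infDist x s := by
  by_contra hc
  push_neg at hc
  obtain ⟨y, hy, hlt⟩ := (Metric.infDist_lt_iff hs).1 hc
  exact absurd (h y hy) (not_le.2 hlt)

private lemma mem_cone_iff {ν m : ℝ} (hν0 : 0 < ν) (hν1 : ν < Real.pi / 16) (hm : 4 ≤ m)
    (lam w : ℂ) :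
    w ∈ cone ν m lam ↔
      (Complex.exp (((ν - ν/m : ℝ):ℂ) * Complex.I) * (w - lam)).im ≤ 0 ∧
      0 ≤ (Complex.exp (((ν + ν/m : ℝ):ℂ) * Complex.I) * (w - lam)).im := by
  have hπ : (3:ℝ) < Real.pi := Real.pi_gt_three
  have hνm : ν / m ≤ ν / 4 := div_le_div_of_nonneg_left hν0.le (by norm_num) hm
  have hνm0 : 0 < ν / m := div_pos hν0 (by linarith)
  constructor
  · rintro ⟨x, hx, α, hα, rfl⟩
    rw [abs_le] at hα
    simp only [add_sub_cancel_left, im_aux]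
    constructor
    · apply mul_nonpos_of_nonneg_of_nonpos hx
      apply Real.sin_nonpos_of_nonpos_of_neg_pi_le
      · linarith
      · linarith
    · apply mul_nonneg hx
      apply Real.sin_nonneg_of_nonneg_of_le_pi
      · linarith
      · linarith
  · rintro ⟨h1, h2⟩
    by_cases hw : w - lam = 0
    · refine ⟨0, le_rfl, ν, by simpa using hνm0.le, ?_⟩
      have : w = lam := by
        have := sub_eq_zero.mp hw; simp [this]
      simp [this]
    · set β := Complex.arg (w - lam) with hβ
      set R := ‖w - lam‖ with hR
      have hR0 : 0 < R := by
        simpa [hR] using (norm_pos_iff.mpr hw)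
      have hvrep : w - lam = (R:ℂ) * Complex.exp ((β:ℂ) * Complex.I) :=
        (Complex.norm_mul_exp_arg_mul_I (w - lam)).symm
      have him : ∀ ψ : ℝ, (Complex.exp ((ψ:ℂ) * Complex.I) * (w - lam)).im
          = R * Real.sin (ψ + β) := by
        intro ψ
        rw [hvrep]
        have : ((R:ℂ) * Complex.exp ((β:ℂ) * Complex.I))
            = (R:ℂ) * Complex.exp (-((-β : ℝ):ℂ) * Complex.I) := by push_cast; ring_nf
        rw [this, im_aux]
        ring_nf
      rw [him] at h1 h2
      have hs1 : Real.sin ((ν - ν/m) + β) ≤ 0 := by nlinarith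
      have hs2 : 0 ≤ Real.sin ((ν + ν/m) + β) := by nlinarith
      have hβlo : -Real.pi < β := Complex.neg_pi_lt_arg _
      have hβhi : β ≤ Real.pi := Complex.arg_le_pi _
      -- β ≤ -(ν - ν/m)
      have hb1 : β ≤ -(ν - ν/m) := by
        by_contra hc
        push_neg at hc
        have h0 : 0 < (ν - ν/m) + β := by linarith
        have hge : Real.pi ≤ (ν - ν/m) + β := by
          by_contra hc2
          push_neg at hc2
          have := Real.sin_pos_of_pos_of_lt_pi h0 hc2
          linarith
        -- then (ν + ν/m) + β ∈ (π, 2π), sin < 0, contradiction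
        have hx0 : 0 < ((ν + ν/m) + β) - Real.pi := by linarith
        have hx1 : ((ν + ν/m) + β) - Real.pi < Real.pi := by linarith
        have := Real.sin_pos_of_pos_of_lt_pi hx0 hx1
        rw [Real.sin_sub_pi] at this
        linarith
      -- -(ν + ν/m) ≤ β
      have hb2 : -(ν + ν/m) ≤ β := by
        by_contra hc
        push_neg at hc
        have h0 : (ν + ν/m) + β < 0 := by linarith
        have h1' : -Real.pi < (ν + ν/m) + β := by linarith
        have : Real.sin (-((ν + ν/m) + β)) > 0 := by
          apply Real.sin_pos_of_pos_of_lt_pi <;> linarith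
        rw [Real.sin_neg] at this
        linarith
      refine ⟨R, hR0.le, -β, ?_, ?_⟩
      · rw [abs_le]; constructor <;> linarith
      · have : (-((-β : ℝ):ℂ) * Complex.I) = (β:ℂ) * Complex.I := by push_cast; ring
        rw [this, ← hvrep]
        ring

/-- For `ν ∈ (0, π/16)`, `m ≥ 4`, `θ` with `Im θ = ν`, `|Re θ| ≤ 10⁻³`,
`λ ∈ ℂ`, `z ∉ C_m(λ)`, `0 ≤ r ≤ |z - λ|` and `s ≥ 0`:
`(s + r)/dist(z - e^{-θ} s, C_m(λ)) ≤ 2/sin(ν/m) + r/dist(z, C_m(λ))`. -/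
theorem cone_dist_quotient_bound
    (ν m : ℝ) (hν : ν ∈ Set.Ioo (0 : ℝ) (Real.pi / 16)) (hm : 4 ≤ m)
    (θ : ℂ) (hθim : θ.im = ν) (hθre : |θ.re| ≤ 1 / 1000) (lam : ℂ) :
    ∀ z : ℂ, z ∉ cone ν m lam →
      ∀ r : ℝ, 0 ≤ r → r ≤ ‖z - lam‖ →
        ∀ s : ℝ, 0 ≤ s →
          (s + r) / Metric.infDist (z - Complex.exp (-θ) * (s : ℂ)) (cone ν m lam) ≤
            2 / Real.sin (ν / m) + r / Metric.infDist z (cone ν m lam) := by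
  obtain ⟨hν0, hν1⟩ := hν
  intro z hz r hr0 _ s hs
  have hπ : (3:ℝ) < Real.pi := Real.pi_gt_three
  have hνm : ν / m ≤ ν / 4 := div_le_div_of_nonneg_left hν0.le (by norm_num) hm
  have hνm0 : 0 < ν / m := div_pos hν0 (by linarith)
  set σ := Real.sin (ν / m) with hσdef
  have hσ : 0 < σ := Real.sin_pos_of_pos_of_lt_pi hνm0 (by linarith)
  have hσ1 : σ ≤ 1 := Real.sin_le_one _
  set ψ₁ := ν - ν/m with hψ₁
  set ψ₂ := ν + ν/m with hψ₂
  have hchar := fun w => mem_cone_iff hν0 hν1 hm lam w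
  set C := cone ν m lam with hC
  have hne : C.Nonempty := ⟨lam, (hchar lam).2 (by simp)⟩
  -- the two linear functionals
  set L₁ := fun w : ℂ => (Complex.exp ((ψ₁:ℂ) * Complex.I) * (w - lam)).im with hL₁
  set L₂ := fun w : ℂ => (Complex.exp ((ψ₂:ℂ) * Complex.I) * (w - lam)).im with hL₂
  have hzL : 0 < L₁ z ∨ L₂ z < 0 := by
    by_contra hc
    push_neg at hc
    exact hz ((hchar z).2 ⟨hc.1, hc.2⟩)
  -- rewrite the moved point
  set s' := s * Real.exp (-θ.re) with hs'def
  have hs'0 : 0 ≤ s' := mul_nonneg hs (Real.exp_pos _).le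
  have hq : z - Complex.exp (-θ) * (s : ℂ)
      = z - (s' : ℂ) * Complex.exp (-(ν:ℂ) * Complex.I) := by
    have hθ : -θ = ((-θ.re : ℝ) : ℂ) + (-(ν:ℂ)) * Complex.I := by
      apply Complex.ext <;> simp [hθim]
    rw [hθ, Complex.exp_add, ← Complex.ofReal_exp]
    push_cast [hs'def]
    ring
  rw [hq]
  set q := z - (s' : ℂ) * Complex.exp (-(ν:ℂ) * Complex.I) with hqdef
  set D := Metric.infDist q C with hD
  set d := Metric.infDist z C with hd
  -- L values at q
  have hL₁q : L₁ q = L₁ z + s' * σ := by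
    have h1 : q - lam = (z - lam) + ((-s' : ℝ):ℂ) * Complex.exp (-(ν:ℂ) * Complex.I) := by
      rw [hqdef]; push_cast; ring
    show (Complex.exp ((ψ₁:ℂ) * Complex.I) * (q - lam)).im = L₁ z + s' * σ
    rw [h1, mul_add, Complex.add_im, im_aux]
    have hsin : Real.sin (ψ₁ - ν) = -σ := by
      rw [hψ₁, hσdef, show ν - ν/m - ν = -(ν/m) by ring, Real.sin_neg]
    have hA : (Complex.exp ((ψ₁:ℂ) * Complex.I) * (z - lam)).im = L₁ z := rfl
    rw [hsin, hA]; ring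
  have hL₂q : L₂ q = L₂ z - s' * σ := by
    have h1 : q - lam = (z - lam) + ((-s' : ℝ):ℂ) * Complex.exp (-(ν:ℂ) * Complex.I) := by
      rw [hqdef]; push_cast; ring
    show (Complex.exp ((ψ₂:ℂ) * Complex.I) * (q - lam)).im = L₂ z - s' * σ
    rw [h1, mul_add, Complex.add_im, im_aux]
    have hsin : Real.sin (ψ₂ - ν) = σ := by
      rw [hψ₂, hσdef, show ν + ν/m - ν = ν/m by ring]
    have hA : (Complex.exp ((ψ₂:ℂ) * Complex.I) * (z - lam)).im = L₂ z := rfl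
    rw [hsin, hA]; ring
  -- generic lower bound: for any w, L₁ w ≤ infDist w C and -L₂ w ≤ infDist w C
  have hlb₁ : ∀ w : ℂ, L₁ w ≤ Metric.infDist w C := by
    intro w
    apply le_infDist' hne
    intro p hp
    have hpL := (hchar p).1 hp
    have := im_le_dist ψ₁ (w - lam) (p - lam)
    rw [show w - lam - (p - lam) = w - p by ring] at this
    rw [dist_eq_norm]
    calc L₁ w ≤ L₁ w - L₁ p := by simp only [hL₁]; linarith [hpL.1]
      _ ≤ ‖w - p‖ := this
      _ = ‖w - p‖ := rfl
  have hlb₂ : ∀ w : ℂ, -L₂ w ≤ Metric.infDist w C := by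
    intro w
    apply le_infDist' hne
    intro p hp
    have hpL := (hchar p).1 hp
    have := im_le_dist ψ₂ (p - lam) (w - lam)
    rw [show p - lam - (w - lam) = p - w by ring] at this
    rw [dist_eq_norm]
    calc -L₂ w ≤ L₂ p - L₂ w := by simp only [hL₂]; linarith [hpL.2]
      _ ≤ ‖p - w‖ := this
      _ = ‖w - p‖ := by rw [norm_sub_rev]
  -- shifting along the axis direction
  have hgen : ∀ (ψ : ℝ) (w : ℂ) (t : ℝ),
      (Complex.exp ((ψ:ℂ) * Complex.I) *
        ((w + (t:ℂ) * Complex.exp (-(ν:ℂ) * Complex.I)) - lam)).im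
        = (Complex.exp ((ψ:ℂ) * Complex.I) * (w - lam)).im + t * Real.sin (ψ - ν) := by
    intro ψ w t
    have h1 : (w + (t:ℂ) * Complex.exp (-(ν:ℂ) * Complex.I)) - lam
        = (w - lam) + (t:ℂ) * Complex.exp (-(ν:ℂ) * Complex.I) := by ring
    rw [h1, mul_add, Complex.add_im, im_aux]
  have hsin₁ : Real.sin (ν - ν/m - ν) = -σ := by
    rw [show ν - ν/m - ν = -(ν/m) by ring, Real.sin_neg, hσdef]
  have hsin₂ : Real.sin (ν + ν/m - ν) = σ := by
    rw [show ν + ν/m - ν = ν/m by ring, hσdef]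
  have hsσ : 0 ≤ s' * σ := mul_nonneg hs'0 hσ.le
  have hDd : d ≤ D := by
    apply le_infDist' hne
    intro p hp
    obtain ⟨h1, h2⟩ := (hchar p).1 hp
    have hp' : p + (s':ℂ) * Complex.exp (-(ν:ℂ) * Complex.I) ∈ C := by
      apply (hchar _).2
      constructor
      · rw [hgen (ν - ν/m) p s', hsin₁]; nlinarith
      · rw [hgen (ν + ν/m) p s', hsin₂]; nlinarith
    calc d ≤ dist z (p + (s':ℂ) * Complex.exp (-(ν:ℂ) * Complex.I)) :=
          Metric.infDist_le_dist_of_mem hp'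
      _ = dist q p := by
          rw [dist_eq_norm, dist_eq_norm, hqdef]; congr 1; ring
  have hDs : s' * σ ≤ D := by
    rcases hzL with hpos | hneg
    · calc s' * σ ≤ L₁ z + s' * σ := by linarith
        _ = L₁ q := hL₁q.symm
        _ ≤ D := hlb₁ q
    · calc s' * σ ≤ -(L₂ q) := by rw [hL₂q]; linarith
        _ ≤ D := hlb₂ q
  have hd_pos : 0 < d := by
    rcases hzL with hpos | hneg
    · exact lt_of_lt_of_le hpos (hlb₁ z)
    · exact lt_of_lt_of_le (by linarith : (0:ℝ) < -(L₂ z)) (hlb₂ z)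
  have hD_pos : 0 < D := lt_of_lt_of_le hd_pos hDd
  have hs2 : s ≤ 2 * s' := by
    have h1 : -(1/1000 : ℝ) ≤ -θ.re := by
      have := abs_le.mp hθre; linarith
    have h2 : (-θ.re) + 1 ≤ Real.exp (-θ.re) := Real.add_one_le_exp _
    have h3 : (0:ℝ) ≤ 2 * Real.exp (-θ.re) - 1 := by linarith
    have h4 := mul_nonneg hs h3
    rw [hs'def]; nlinarith
  rw [add_div]
  have h1 : s / D ≤ 2 / σ := by
    rw [div_le_div_iff₀ hD_pos hσ]
    have := mul_le_mul_of_nonneg_right hs2 hσ.le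
    linarith
  have h2 : r / D ≤ r / d := by
    gcongr
  linarith
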